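/- Let q be the orthogonal projection onto the orthogonal complement of the range of a partial isometry v, and let T be a positive contraction commuting with v*v. Then (q + vT²v*)^{1/2} = q + vTv*. -/

import Mathlib

/-- `v` is a partial isometry iff `v*v` is an (orthogonal) projection. -/
def IsPartialIsometry {H : Type*} [NormedAddCommGroup H] [InnerProductSpace ℂ H]
    [CompleteSpace H] (v : H →L[ℂ] H) : Prop :=
  IsIdempotentElem (star v * v)

theorem sqrt_of_q_add_vT2v
    (H : Type*) [NormedAddCommGroup H] [InnerProductSpace ℂ H] [CompleteSpace H]
    (v T q : H →L[ℂ] H) (hv : IsPartialIsometry v) (hq : q = 1 - v * star v)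
    (hpos : T.IsPositive) (hcontr : ‖T‖ ≤ 1)
    (hcomm : star v * v * T = T * (star v * v)) :
    cfc Real.sqrt (q + v * T ^ 2 * star v) = q + v * T * star v := by
  have hT : (0 : H →L[ℂ] H) ≤ T := (T.nonneg_iff_isPositive).mpr hpos
  have hTsa : star T = T := hpos.isSelfAdjoint
  have hv' : (star v * v) * (star v * v) = star v * v := hv
  -- v * (star v * v) = v
  have hve : v * (star v * v) = v := by
    have h0 : star (v * (star v * v) - v) * (v * (star v * v) - v) = 0 := by
      have hsa : star (star v * v) = star v * v := by
        rw [star_mul, star_star]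
      calc star (v * (star v * v) - v) * (v * (star v * v) - v)
          = (star v * v) * ((star v * v) * (star v * v))
            - (star v * v) * (star v * v) - (star v * v) * (star v * v)
            + star v * v := by
            rw [star_sub, star_mul, hsa]; noncomm_ring
        _ = 0 := by rw [hv']; rw [hv']; abel
    have h1 := (CStarRing.star_mul_self_eq_zero_iff _).mp h0
    have := sub_eq_zero.mp h1
    exact this
  have hev : (star v * v) * star v = star v := by
    calc (star v * v) * star v = star (v * (star v * v)) := by
          rw [star_mul, star_mul, star_star]
      _ = star v := by rw [hve]
  have hp2 : (v * star v) * (v * star v) = v * star v := by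
    calc (v * star v) * (v * star v) = (v * (star v * v)) * star v := by noncomm_ring
      _ = v * star v := by rw [hve]
  have hqv : q * v = 0 := by
    rw [hq, sub_mul, one_mul, mul_assoc, hve, sub_self]
  have hvq : star v * q = 0 := by
    rw [hq, mul_sub, mul_one, ← mul_assoc, hev, sub_self]
  have hqsa : star q = q := by
    rw [hq]; simp [star_sub, star_mul, star_star]
  have hq2 : q * q = q := by
    rw [hq]; exact (IsIdempotentElem.one_sub hp2)
  set b := q + v * T * star v with hb
  have hbb : b * b = q + v * T ^ 2 * star v := by
    have h1 : q * (v * T * star v) = 0 := by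
      rw [show q * (v * T * star v) = (q * v) * (T * star v) by noncomm_ring, hqv, zero_mul]
    have h2 : (v * T * star v) * q = 0 := by
      rw [show (v * T * star v) * q = (v * T) * (star v * q) by noncomm_ring, hvq, mul_zero]
    have h3 : (v * T * star v) * (v * T * star v) = v * T ^ 2 * star v := by
      calc (v * T * star v) * (v * T * star v)
          = v * (T * ((star v * v) * T)) * star v := by noncomm_ring
        _ = v * (T * (T * (star v * v))) * star v := by rw [hcomm]
        _ = (v * (T * T)) * ((star v * v) * star v) := by noncomm_ring
        _ = v * T ^ 2 * star v := by rw [hev]; noncomm_ring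
    rw [hb, add_mul, mul_add, mul_add, hq2, h1, h2, h3, add_zero, zero_add]
  have hbsa : IsSelfAdjoint b := by
    rw [IsSelfAdjoint, hb, star_add, hqsa, star_mul, star_mul, star_star, hTsa, mul_assoc]
  have hqnn : (0 : H →L[ℂ] H) ≤ q := by
    have := star_mul_self_nonneg q
    rwa [hqsa, hq2] at this
  have hvTv : (0 : H →L[ℂ] H) ≤ v * T * star v := star_right_conjugate_nonneg hT v
  have hbnn : (0 : H →L[ℂ] H) ≤ b := add_nonneg hqnn hvTv
  have hab : q + v * T ^ 2 * star v = b ^ 2 := by rw [pow_two b, hbb]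
  rw [hab, ← cfc_comp_pow Real.sqrt 2 b]
  have hcong : (spectrum ℝ b).EqOn (fun x => Real.sqrt (x ^ 2)) id := by
    intro x hx
    simp only [id]
    exact Real.sqrt_sq (spectrum_nonneg_of_nonneg hbnn hx)
  rw [cfc_congr hcong, cfc_id ℝ b]
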